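/- The constant starter S̃ = 0 is an approximate zero of f_{g,L} for all (g,L) in the region R₃(0) = {(g,L) : 0 < g < 1, 0 < L < min{α₀·(1−g), √3·α₀·(1−g)^{3/2}/g^{1/2}}}. -/

import Mathlib

noncomputable section

/-- The hyperbolic Kepler function `f_{g,L}(S) = S - g·arcsinh(S) - L`. -/
def fhk (g L : ℝ) : ℝ → ℝ := fun S => S - g * Real.arsinh S - L

/-- `β(f,z) = |f(z)/f'(z)|`. -/
def betaFn (f : ℝ → ℝ) (z : ℝ) : ℝ := |f z / deriv f z|

/-- `γ(f,z) = sup_{k ≥ 2} |f^{(k)}(z)/(k!·f'(z))|^{1/(k-1)}`. -/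
def gammaFn (f : ℝ → ℝ) (z : ℝ) : ℝ :=
  sSup {y : ℝ | ∃ k : ℕ, 2 ≤ k ∧
    y = |iteratedDeriv k f z / (Nat.factorial k * deriv f z)| ^ ((1 : ℝ) / ((k : ℝ) - 1))}

/-- `α(f,z) = β(f,z)·γ(f,z)`. -/
def alphaFn (f : ℝ → ℝ) (z : ℝ) : ℝ := betaFn f z * gammaFn f z

/-- Smale's constant (improved by Wang–Han): `α₀ = 3 - 2√2`. -/
def alpha0 : ℝ := 3 - 2 * Real.sqrt 2

/-- `z` is an approximate zero of `f` when `α(f,z) < α₀`. -/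
def ApproxZero (f : ℝ → ℝ) (z : ℝ) : Prop := alphaFn f z < alpha0


section Aux
open Real

lemma sqrt12_pos (x : ℝ) : 0 < Real.sqrt (1 + x ^ 2) :=
  Real.sqrt_pos.2 (by positivity)

lemma deriv_arsinh_eq : deriv Real.arsinh = fun x => (Real.sqrt (1 + x ^ 2))⁻¹ :=
  funext fun x => (Real.hasDerivAt_arsinh x).deriv

lemma hasDerivAt_inner (x : ℝ) :
    HasDerivAt (fun x : ℝ => (Real.sqrt (1 + x ^ 2))⁻¹)
      (-(x / Real.sqrt (1 + x ^ 2) ^ 3)) x := by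
  have h1 : HasDerivAt (fun x : ℝ => 1 + x ^ 2) (2 * x) x := by
    simpa using (hasDerivAt_pow 2 x).const_add 1
  have h2 : HasDerivAt (fun x : ℝ => Real.sqrt (1 + x ^ 2))
      (1 / (2 * Real.sqrt (1 + x ^ 2)) * (2 * x)) x :=
    (Real.hasDerivAt_sqrt (by positivity : (1:ℝ) + x ^ 2 ≠ 0)).comp x h1
  have h3 : HasDerivAt (fun x : ℝ => (Real.sqrt (1 + x ^ 2))⁻¹)
      (-(1 / (2 * Real.sqrt (1 + x ^ 2)) * (2 * x)) / Real.sqrt (1 + x ^ 2) ^ 2) x :=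
    h2.inv (ne_of_gt (sqrt12_pos x))
  convert h3 using 1
  have hs := sqrt12_pos x
  have hs2 : Real.sqrt (1 + x ^ 2) ^ 2 = 1 + x ^ 2 := Real.sq_sqrt (by positivity)
  field_simp

lemma deriv2_arsinh : deriv (deriv Real.arsinh) =
    fun x => -(x / Real.sqrt (1 + x ^ 2) ^ 3) := by
  rw [deriv_arsinh_eq]
  exact funext fun x => (hasDerivAt_inner x).deriv

lemma key_ode : deriv (deriv Real.arsinh) =
    fun x => -(x * deriv Real.arsinh x) - x ^ 2 * deriv (deriv Real.arsinh) x := by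
  funext x
  rw [deriv2_arsinh, deriv_arsinh_eq]
  have hs := sqrt12_pos x
  have hs2 : Real.sqrt (1 + x ^ 2) ^ 2 = 1 + x ^ 2 := Real.sq_sqrt (by positivity)
  field_simp
  linear_combination x * hs2

lemma iteratedDeriv_id_mul (f : ℝ → ℝ) (hf : ContDiff ℝ (⊤ : ℕ∞) f) (n : ℕ) :
    iteratedDeriv (n + 1) (fun x => x * f x) = fun x =>
      x * iteratedDeriv (n + 1) f x + ((n : ℝ) + 1) * iteratedDeriv n f x := by
  have hD : ∀ m : ℕ, ContDiff ℝ (⊤ : ℕ∞) (iteratedDeriv m f) := by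
    intro m; rw [iteratedDeriv_eq_iterate]; exact hf.iterate_deriv m
  have hDd : ∀ (m : ℕ) (x : ℝ), HasDerivAt (iteratedDeriv m f) (iteratedDeriv (m + 1) f x) x := by
    intro m x
    have := ((hD m).differentiable (by simp) x).hasDerivAt
    rwa [iteratedDeriv_succ]
  induction n with
  | zero =>
    funext x
    have h : HasDerivAt (fun x : ℝ => x * f x) (1 * f x + x * iteratedDeriv 1 f x) x :=
      (hasDerivAt_id x).mul (by simpa using hDd 0 x)
    rw [iteratedDeriv_one, h.deriv, iteratedDeriv_zero]
    push_cast; ring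
  | succ n ih =>
    funext x
    rw [iteratedDeriv_succ, ih]
    have h1 : HasDerivAt (fun y : ℝ => y * iteratedDeriv (n + 1) f y)
        (1 * iteratedDeriv (n + 1) f x + x * iteratedDeriv (n + 2) f x) x :=
      (hasDerivAt_id x).mul (hDd (n + 1) x)
    have h2 : HasDerivAt (fun y : ℝ => ((n : ℝ) + 1) * iteratedDeriv n f y)
        (((n : ℝ) + 1) * iteratedDeriv (n + 1) f x) x := (hDd n x).const_mul _
    have h3 : HasDerivAt (fun y : ℝ => y * iteratedDeriv (n + 1) f y + ((n : ℝ) + 1) * iteratedDeriv n f y) _ x := h1.add h2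
    rw [h3.deriv]
    push_cast; ring

lemma contDiff_arsinh' : ContDiff ℝ (⊤ : ℕ∞) Real.arsinh := Real.contDiff_arsinh

lemma contDiff_v1 : ContDiff ℝ (⊤ : ℕ∞) (deriv Real.arsinh) := by
  have := contDiff_arsinh'.iterate_deriv 1
  simpa using this

lemma contDiff_v2 : ContDiff ℝ (⊤ : ℕ∞) (deriv (deriv Real.arsinh)) := by
  have := contDiff_arsinh'.iterate_deriv 2
  simpa [Function.iterate_succ, Function.comp] using this

-- iteratedDeriv of x^2 * f via two applications of id_mul
lemma iteratedDeriv_sq_mul (f : ℝ → ℝ) (hf : ContDiff ℝ (⊤ : ℕ∞) f) (n : ℕ) :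
    iteratedDeriv (n + 2) (fun x => x ^ 2 * f x) = fun x =>
      x ^ 2 * iteratedDeriv (n + 2) f x
        + 2 * ((n : ℝ) + 2) * x * iteratedDeriv (n + 1) f x
        + ((n : ℝ) + 2) * ((n : ℝ) + 1) * iteratedDeriv n f x := by
  have hxf : ContDiff ℝ (⊤ : ℕ∞) (fun x : ℝ => x * f x) := contDiff_id.mul hf
  have e1 : (fun x : ℝ => x ^ 2 * f x) = fun x => x * (x * f x) := by
    funext x; ring
  rw [e1, iteratedDeriv_id_mul _ hxf (n + 1)]
  funext x
  rw [iteratedDeriv_id_mul _ hf (n + 1), iteratedDeriv_id_mul _ hf n]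
  push_cast; ring

lemma cd_on {f : ℝ → ℝ} (hf : ContDiff ℝ (⊤ : ℕ∞) f) (m : ℕ) :
    ContDiffOn ℝ m f Set.univ := (hf.of_le (by exact_mod_cast le_top)).contDiffOn

lemma itd_F1 (m : ℕ) : iteratedDeriv m (fun x => x * deriv Real.arsinh x) 0
    = (m : ℝ) * iteratedDeriv m Real.arsinh 0 := by
  cases m with
  | zero => simp
  | succ k =>
    rw [iteratedDeriv_id_mul _ contDiff_v1 k]
    simp only [← iteratedDeriv_succ']
    push_cast; ring

lemma itd_F2 (m : ℕ) : iteratedDeriv m (fun x => x ^ 2 * deriv (deriv Real.arsinh) x) 0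
    = (m : ℝ) * ((m : ℝ) - 1) * iteratedDeriv m Real.arsinh 0 := by
  match m with
  | 0 => simp
  | 1 =>
    have hv2 : HasDerivAt (deriv (deriv Real.arsinh)) (deriv (deriv (deriv Real.arsinh)) 0) 0 :=
      ((contDiff_v2.differentiable (by simp)) 0).hasDerivAt
    have h : HasDerivAt (fun x => x ^ 2 * deriv (deriv Real.arsinh) x)
        ((2 * 0 ^ 1) * deriv (deriv Real.arsinh) 0
          + 0 ^ 2 * deriv (deriv (deriv Real.arsinh)) 0) 0 :=
      (hasDerivAt_pow 2 0).mul hv2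
    rw [iteratedDeriv_one, h.deriv]
    norm_num
  | (k + 2) =>
    rw [iteratedDeriv_sq_mul _ contDiff_v2 k]
    have e : iteratedDeriv k (deriv (deriv Real.arsinh)) 0
        = iteratedDeriv (k + 2) Real.arsinh 0 := by
      rw [iteratedDeriv_succ', iteratedDeriv_succ']
    simp only [e]
    push_cast; ring

lemma recur (n : ℕ) : iteratedDeriv (n + 2) Real.arsinh 0
    = -(n : ℝ) ^ 2 * iteratedDeriv n Real.arsinh 0 := by
  have h2 : iteratedDeriv (n + 2) Real.arsinh
      = iteratedDeriv n (deriv (deriv Real.arsinh)) := by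
    rw [iteratedDeriv_succ', iteratedDeriv_succ']
  rw [h2, key_ode]
  have e : (fun x : ℝ => -(x * deriv Real.arsinh x) - x ^ 2 * deriv (deriv Real.arsinh) x)
      = fun x => -((fun x => x * deriv Real.arsinh x) x
          + (fun x => x ^ 2 * deriv (deriv Real.arsinh) x) x) := by
    funext x; ring
  rw [e]
  have hF1 : ContDiff ℝ (⊤ : ℕ∞) (fun x : ℝ => x * deriv Real.arsinh x) :=
    contDiff_id.mul contDiff_v1
  have hF2 : ContDiff ℝ (⊤ : ℕ∞) (fun x : ℝ => x ^ 2 * deriv (deriv Real.arsinh) x) :=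
    (contDiff_id.pow 2).mul contDiff_v2
  have hne := iteratedDeriv_fun_neg n (fun x : ℝ => (fun x : ℝ => x * deriv Real.arsinh x) x
      + (fun x : ℝ => x ^ 2 * deriv (deriv Real.arsinh) x) x) 0
  rw [hne]
  have hadd : iteratedDeriv n (fun x : ℝ => (fun x : ℝ => x * deriv Real.arsinh x) x
      + (fun x : ℝ => x ^ 2 * deriv (deriv Real.arsinh) x) x) 0
      = iteratedDeriv n (fun x : ℝ => x * deriv Real.arsinh x) 0
        + iteratedDeriv n (fun x : ℝ => x ^ 2 * deriv (deriv Real.arsinh) x) 0 := by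
    rw [← iteratedDerivWithin_univ, ← iteratedDerivWithin_univ (f := fun x : ℝ => x * deriv Real.arsinh x),
      ← iteratedDerivWithin_univ (f := fun x : ℝ => x ^ 2 * deriv (deriv Real.arsinh) x)]
    exact iteratedDerivWithin_add (Set.mem_univ 0) uniqueDiffOn_univ ((cd_on hF1 n).contDiffWithinAt (Set.mem_univ 0)) ((cd_on hF2 n).contDiffWithinAt (Set.mem_univ 0))
  rw [hadd, itd_F1, itd_F2]
  ring

lemma a0 : iteratedDeriv 0 Real.arsinh 0 = 0 := by simp
lemma a1 : iteratedDeriv 1 Real.arsinh 0 = 1 := by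
  rw [iteratedDeriv_one, deriv_arsinh_eq]; norm_num

lemma abs_a_le (m : ℕ) :
    |iteratedDeriv (m + 2) Real.arsinh 0| ≤ (Nat.factorial (m + 2) : ℝ) / 3 := by
  induction m using Nat.strong_induction_on with
  | _ m ih =>
    match m with
    | 0 => rw [recur 0, a0]; norm_num
    | 1 =>
      rw [recur 1, a1]
      norm_num [Nat.factorial]
    | (k + 2) =>
      have hk := ih k (by omega)
      rw [recur (k + 2)]
      rw [abs_mul, abs_neg, abs_pow, Nat.abs_cast]
      have h1 : ((k : ℝ) + 2) ^ 2 ≤ ((k : ℝ) + 3) * ((k : ℝ) + 4) := by nlinarith [Nat.cast_nonneg (α := ℝ) k]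
      have hfac : (Nat.factorial (k + 4) : ℝ)
          = ((k : ℝ) + 4) * ((k : ℝ) + 3) * (Nat.factorial (k + 2) : ℝ) := by
        show (Nat.factorial (k + 2 + 2) : ℝ) = _
        rw [Nat.factorial_succ, Nat.factorial_succ]
        push_cast; ring
      have hfp : (0 : ℝ) < (Nat.factorial (k + 2) : ℝ) := by
        exact_mod_cast Nat.factorial_pos _
      have habs : (0:ℝ) ≤ |iteratedDeriv (k + 2) Real.arsinh 0| := abs_nonneg _
      push_cast
      calc ((k : ℝ) + 2) ^ 2 * |iteratedDeriv (k + 2) Real.arsinh 0|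
          ≤ ((k : ℝ) + 3) * ((k : ℝ) + 4) * ((Nat.factorial (k + 2) : ℝ) / 3) := by
            apply mul_le_mul h1 hk habs (by positivity)
        _ ≤ (Nat.factorial (k + 2 + 2) : ℝ) / 3 := by
            rw [show k + 2 + 2 = k + 4 from rfl, hfac]; ring_nf; nlinarith [hfp]

lemma fhk_deriv (g L x : ℝ) :
    deriv (fhk g L) x = 1 - g * (Real.sqrt (1 + x ^ 2))⁻¹ := by
  have h : HasDerivAt (fhk g L) (1 - g * (Real.sqrt (1 + x ^ 2))⁻¹) x :=
    ((hasDerivAt_id x).sub ((Real.hasDerivAt_arsinh x).const_mul g)).sub_const L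
  exact h.deriv

lemma fhk_deriv_fun (g L : ℝ) :
    deriv (fhk g L) = fun x => 1 - g * deriv Real.arsinh x := by
  funext x
  rw [fhk_deriv, (Real.hasDerivAt_arsinh x).deriv]

lemma fhk_deriv_zero (g L : ℝ) : deriv (fhk g L) 0 = 1 - g := by
  rw [fhk_deriv]; norm_num

lemma fhk_iteratedDeriv (g L : ℝ) (m : ℕ) :
    iteratedDeriv (m + 2) (fhk g L) 0 = -(g * iteratedDeriv (m + 2) Real.arsinh 0) := by
  rw [iteratedDeriv_succ', fhk_deriv_fun]
  have h1 : iteratedDeriv (m + 1) (fun x => 1 - g * deriv Real.arsinh x) 0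
      = iteratedDeriv (m + 1) (fun x => -(g * deriv Real.arsinh x)) 0 := by
    rw [← iteratedDerivWithin_univ, ← iteratedDerivWithin_univ]
    exact iteratedDerivWithin_const_sub (Nat.succ_pos m) 1
  rw [h1]
  rw [iteratedDeriv_fun_neg]
  congr 1
  have h2 : iteratedDeriv (m + 1) (fun x => g * deriv Real.arsinh x) 0
      = g * iteratedDeriv (m + 1) (deriv Real.arsinh) 0 := by
    rw [← iteratedDerivWithin_univ, ← iteratedDerivWithin_univ]
    exact iteratedDerivWithin_const_mul (Set.mem_univ 0) uniqueDiffOn_univ g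
      ((contDiff_v1.of_le (by exact_mod_cast le_top)).contDiffOn.contDiffWithinAt (Set.mem_univ 0))
  rw [h2, ← iteratedDeriv_succ']

end Aux

/-- Theorem 3.1 (zero case): the constant starter `S̃ = 0` is an approximate zero of
`f_{g,L}` in `R₃(0) = {0 < g < 1, 0 < L < min{α₀(1-g), √3·α₀·(1-g)^{3/2}/g^{1/2}}}`. -/
theorem zero_starter_region (g L : ℝ) (hg0 : 0 < g) (hg1 : g < 1) (hL0 : 0 < L)
    (hL1 : L < min (alpha0 * (1 - g))
      (Real.sqrt 3 * alpha0 * (1 - g) ^ ((3 : ℝ) / 2) / g ^ ((1 : ℝ) / 2))) :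
    ApproxZero (fhk g L) 0 := by
  have h1g : 0 < 1 - g := by linarith
  set f := fhk g L with hf
  -- beta
  have hf0 : f 0 = -L := by simp [hf, fhk]
  have hbeta : betaFn f 0 = L / (1 - g) := by
    rw [betaFn, hf0, fhk_deriv_zero, abs_div, abs_neg, abs_of_pos hL0, abs_of_pos h1g]
  -- gamma bound
  set t : ℝ := g / (3 * (1 - g)) with ht
  have ht0 : 0 ≤ t := by positivity
  set B : ℝ := max 1 (Real.sqrt t) with hB
  have hB0 : (0 : ℝ) ≤ B := le_trans zero_le_one (le_max_left _ _)
  have hgamma : gammaFn f 0 ≤ B := by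
    apply Real.sSup_le _ hB0
    rintro y ⟨k, hk2, rfl⟩
    match k, hk2 with
    | 2, _ =>
      have h2 : iteratedDeriv 2 Real.arsinh 0 = 0 := by
        rw [show (2 : ℕ) = 0 + 2 from rfl, recur 0]; simp
      have : iteratedDeriv 2 f 0 = 0 := by
        rw [show (2 : ℕ) = 0 + 2 from rfl, fhk_iteratedDeriv, ← show (2:ℕ) = 0 + 2 from rfl, h2]
        ring
      rw [this]
      norm_num
      exact hB0
    | (m + 3), _ =>
      set k := m + 3 with hk
      have hkf : (0 : ℝ) < (Nat.factorial k : ℝ) := by exact_mod_cast Nat.factorial_pos k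
      have hstep : iteratedDeriv k f 0 = -(g * iteratedDeriv k Real.arsinh 0) :=
        fhk_iteratedDeriv g L (m + 1)
      have haa : |iteratedDeriv k Real.arsinh 0| ≤ (Nat.factorial k : ℝ) / 3 :=
        abs_a_le (m + 1)
      have habs : |iteratedDeriv k f 0 / (Nat.factorial k * deriv f 0)| ≤ t := by
        rw [fhk_deriv_zero, hstep, abs_div, abs_neg, abs_mul, abs_mul, abs_of_pos hg0,
          abs_of_pos h1g, Nat.abs_cast]
        rw [div_le_div_iff₀ (by positivity) (by positivity)]
        nlinarith [mul_le_mul_of_nonneg_left haa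
          (by positivity : (0:ℝ) ≤ g * (1 - g) * 3)]
      have hk3 : (3 : ℝ) ≤ (k : ℝ) := by exact_mod_cast (show 3 ≤ k by omega)
      have he0' : (0 : ℝ) ≤ 1 / ((k : ℝ) - 1) := by
        apply div_nonneg zero_le_one; linarith
      have hee : (1 : ℝ) / ((k : ℝ) - 1) ≤ 1 / 2 := by
        apply one_div_le_one_div_of_le (by norm_num); linarith
      calc |iteratedDeriv k f 0 / (Nat.factorial k * deriv f 0)| ^ ((1:ℝ) / ((k:ℝ) - 1))
          ≤ t ^ ((1:ℝ) / ((k:ℝ) - 1)) :=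
            Real.rpow_le_rpow (abs_nonneg _) habs he0'
        _ ≤ B := by
            rcases le_or_gt t 1 with hle | hgt
            · exact le_trans (Real.rpow_le_one ht0 hle he0') (le_max_left _ _)
            · calc t ^ ((1:ℝ) / ((k:ℝ) - 1)) ≤ t ^ ((1:ℝ) / 2) :=
                    Real.rpow_le_rpow_of_exponent_le hgt.le hee
                _ = Real.sqrt t := (Real.sqrt_eq_rpow t).symm
                _ ≤ B := le_max_right _ _
  -- final numeric
  rw [ApproxZero, alphaFn, hbeta]
  have hbB : L / (1 - g) * gammaFn f 0 ≤ L / (1 - g) * B :=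
    mul_le_mul_of_nonneg_left hgamma (by positivity)
  apply lt_of_le_of_lt hbB
  have hL1a : L < alpha0 * (1 - g) := lt_of_lt_of_le hL1 (min_le_left _ _)
  have hL1b : L < Real.sqrt 3 * alpha0 * (1 - g) ^ ((3 : ℝ) / 2) / g ^ ((1 : ℝ) / 2) :=
    lt_of_lt_of_le hL1 (min_le_right _ _)
  set r : ℝ := Real.sqrt (1 - g) with hrdef
  set s : ℝ := Real.sqrt g with hsdef
  have hr0 : 0 < r := Real.sqrt_pos.2 h1g
  have hs0 : 0 < s := Real.sqrt_pos.2 hg0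
  have h30 : 0 < Real.sqrt 3 := Real.sqrt_pos.2 (by norm_num)
  have hr2 : r ^ 2 = 1 - g := Real.sq_sqrt h1g.le
  have hrp1 : g ^ ((1 : ℝ) / 2) = s := (Real.sqrt_eq_rpow g).symm
  have hrp3 : (1 - g) ^ ((3 : ℝ) / 2) = r ^ 3 := by
    rw [show ((3 : ℝ) / 2) = (1 / 2) * (3 : ℕ) by norm_num, Real.rpow_mul h1g.le,
      Real.rpow_natCast, ← Real.sqrt_eq_rpow]
  rw [hrp1, hrp3] at hL1b
  have hkey : L * s < Real.sqrt 3 * alpha0 * r ^ 3 := (lt_div_iff₀ hs0).mp hL1b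
  have hsqt : Real.sqrt t = s / (Real.sqrt 3 * r) := by
    rw [ht, Real.sqrt_div hg0.le, Real.sqrt_mul (by norm_num : (0:ℝ) ≤ 3)]
  have hmax : L / (1 - g) * B
      = max (L / (1 - g) * 1) (L / (1 - g) * (s / (Real.sqrt 3 * r))) := by
    rw [hB, hsqt]
    exact mul_max_of_nonneg _ _ (by positivity)
  rw [hmax]
  apply max_lt
  · rw [mul_one, div_lt_iff₀ h1g]; linarith
  · rw [← hr2, div_mul_div_comm, div_lt_iff₀ (by positivity)]
    calc L * s < Real.sqrt 3 * alpha0 * r ^ 3 := hkey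
      _ = alpha0 * (r ^ 2 * (Real.sqrt 3 * r)) := by ring
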